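/- arXiv:1603.02114 — 2 statements merged into one kernel-verified Lean document; each statement's English description precedes it below -/
import Mathlib

section
/- Removing the bottom row of a primitive (n,k) p-fountain yields an (n-k, k-p) p-fountain, and this is a bijection; hence g(n,k) = f(n-k, k-p) for n >= k and k >= p, and consequently G(q,z) = (qz)^p F(q, qz) as formal power series. -/
/-- A `p`-fountain: an arrangement of coins in rows. `rows i` is the set of positions of
coins in row `i` (row `0` is the bottom row). The bottom row consists of consecutive coins,
and each coin in a higher row has exactly `p+1` descendant coins immediately below it
(so two horizontally adjacent coins share exactly `p` common descendants). -/
structure Fountain (p : ℕ) where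
  rows : ℕ → Finset ℕ
  bottom_consecutive : rows 0 = Finset.range (rows 0).card
  supported : ∀ i j, j ∈ rows (i + 1) → ∀ d ≤ p, j + d ∈ rows i

namespace Fountain
variable {p : ℕ}

/-- The length of the bottom row. -/
def width (F : Fountain p) : ℕ := (F.rows 0).card

/-- The total number of coins. (For `p ≥ 1` all rows above row `width` are empty.) -/
def coins (F : Fountain p) : ℕ := ∑ i ∈ Finset.range (F.width + 1), (F.rows i).card

/-- A fountain is primitive if its next-to-bottom row is full, i.e. has `width - p` coins
(in particular this requires `width ≥ p`). -/
def Primitive (F : Fountain p) : Prop :=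
  p ≤ F.width ∧ F.rows 1 = Finset.range (F.width - p)

lemma ext' {F G : Fountain p} (h : F.rows = G.rows) : F = G := by
  cases F; cases G; simpa using h

lemma mem_rows_of_succ (F : Fountain p) {i j : ℕ} (h : j ∈ F.rows (i+1)) : j ∈ F.rows i := by
  simpa using F.supported i j h 0 (Nat.zero_le p)

lemma card_succ_add (F : Fountain p) (i : ℕ) (h : (F.rows (i+1)).Nonempty) :
    (F.rows (i+1)).card + p ≤ (F.rows i).card := by
  classical
  set m := (F.rows (i+1)).max' h with hm
  have hmem : m ∈ F.rows (i+1) := (F.rows (i+1)).max'_mem h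
  set S : Finset ℕ := (Finset.Icc 1 p).image (m + ·) with hS
  have hScard : S.card = p := by
    rw [hS, Finset.card_image_of_injective _ (add_right_injective m), Nat.card_Icc]
    omega
  have hSsub : S ⊆ F.rows i := by
    intro x hx
    simp only [hS, Finset.mem_image, Finset.mem_Icc] at hx
    obtain ⟨d, ⟨_, hd⟩, rfl⟩ := hx
    exact F.supported i m hmem d hd
  have hsub : F.rows (i+1) ⊆ F.rows i := fun j hj => F.mem_rows_of_succ hj
  have hdisj : Disjoint (F.rows (i+1)) S := by
    rw [Finset.disjoint_right]
    intro x hx hx'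
    simp only [hS, Finset.mem_image, Finset.mem_Icc] at hx
    obtain ⟨d, ⟨hd1, _⟩, rfl⟩ := hx
    have := (F.rows (i+1)).le_max' _ hx'
    omega
  calc (F.rows (i+1)).card + p = ((F.rows (i+1)) ∪ S).card := by
        rw [Finset.card_union_of_disjoint hdisj, hScard]
    _ ≤ (F.rows i).card := Finset.card_le_card (Finset.union_subset hsub hSsub)

lemma card_add_le_width (F : Fountain p) (i : ℕ) (h : (F.rows i).Nonempty) :
    (F.rows i).card + i * p ≤ F.width := by
  induction i with
  | zero => simp [width]
  | succ i ih =>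
    have h' : (F.rows i).Nonempty := by
      obtain ⟨j, hj⟩ := h
      exact ⟨j, F.mem_rows_of_succ hj⟩
    have := F.card_succ_add i h
    have := ih h'
    have : (F.rows (i+1)).card + p + i * p ≤ F.width := by omega
    calc (F.rows (i+1)).card + (i+1) * p = (F.rows (i+1)).card + p + i * p := by ring
      _ ≤ F.width := this

lemma rows_eq_empty (F : Fountain p) (hp : 1 ≤ p) {i : ℕ} (hi : F.width ≤ i) :
    F.rows i = ∅ := by
  by_contra h
  have hne : (F.rows i).Nonempty := Finset.nonempty_iff_ne_empty.2 h
  have h1 := F.card_add_le_width i hne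
  have h2 : 1 ≤ (F.rows i).card := Finset.one_le_card.2 hne
  have h3 : i ≤ i * p := Nat.le_mul_of_pos_right i hp
  omega

lemma coins_eq_sum (F : Fountain p) (hp : 1 ≤ p) {N : ℕ} (hN : F.width ≤ N) :
    F.coins = ∑ i ∈ Finset.range (N + 1), (F.rows i).card := by
  unfold coins
  refine Finset.sum_subset (Finset.range_subset_range.2 (by omega)) ?_
  · intro i _ hni
    have hi : F.width ≤ i := by
      by_contra hlt
      exact hni (Finset.mem_range.2 (by omega))
    rw [F.rows_eq_empty hp hi]
    simp

lemma width_le_coins (F : Fountain p) : F.width ≤ F.coins :=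
  Finset.single_le_sum (f := fun i => (F.rows i).card) (fun i _ => Nat.zero_le _)
    (Finset.mem_range.2 (Nat.succ_pos _))

def strip (F : Fountain p) (hF : F.Primitive) : Fountain p where
  rows i := F.rows (i + 1)
  bottom_consecutive := by
    show F.rows 1 = Finset.range (F.rows 1).card
    rw [hF.2, Finset.card_range]
  supported i j hj d hd := F.supported (i+1) j hj d hd

lemma strip_width (F : Fountain p) (hF : F.Primitive) :
    (F.strip hF).width = F.width - p := by
  show (F.rows 1).card = F.width - p
  rw [hF.2, Finset.card_range]

lemma coins_strip (F : Fountain p) (hp : 1 ≤ p) (hF : F.Primitive) :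
    F.coins = F.width + (F.strip hF).coins := by
  have hw : 1 ≤ F.width := le_trans hp hF.1
  have h1 : F.coins = (∑ i ∈ Finset.range F.width, (F.rows (i+1)).card) + F.width := by
    unfold coins
    rw [Finset.sum_range_succ']
    rfl
  have h2 : (F.strip hF).coins = ∑ i ∈ Finset.range F.width, (F.rows (i+1)).card := by
    rw [(F.strip hF).coins_eq_sum hp (N := F.width - 1) (by rw [F.strip_width hF]; omega),
      show F.width - 1 + 1 = F.width by omega]
    exact Finset.sum_congr rfl (fun i _ => rfl)
  omega

def addBottom (F : Fountain p) : Fountain p where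
  rows i := match i with
    | 0 => Finset.range (F.width + p)
    | (i+1) => F.rows i
  bottom_consecutive := by simp
  supported i j hj d hd := by
    match i with
    | 0 =>
      have hj0 : j ∈ F.rows 0 := hj
      rw [F.bottom_consecutive] at hj0
      have hj' : j < (F.rows 0).card := Finset.mem_range.1 hj0
      show j + d ∈ Finset.range ((F.rows 0).card + p)
      rw [Finset.mem_range]
      have heq : F.width = (F.rows 0).card := rfl
      omega
    | (i+1) => exact F.supported i j hj d hd

lemma addBottom_width (F : Fountain p) : (F.addBottom).width = F.width + p := by
  show (Finset.range (F.width + p)).card = F.width + p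
  simp

lemma addBottom_primitive (F : Fountain p) : (F.addBottom).Primitive := by
  constructor
  · rw [F.addBottom_width]; omega
  · rw [F.addBottom_width]
    show F.rows 0 = Finset.range (F.width + p - p)
    rw [F.bottom_consecutive]
    have heq : F.width = (F.rows 0).card := rfl
    congr 1
    omega

lemma addBottom_coins (F : Fountain p) (hp : 1 ≤ p) :
    (F.addBottom).coins = F.coins + F.width + p := by
  have h1 : (F.addBottom).coins
      = (∑ i ∈ Finset.range (F.width + p), (F.rows i).card) + (F.width + p) := by
    unfold coins
    rw [F.addBottom_width, Finset.sum_range_succ']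
    rw [show ((F.addBottom).rows 0).card = F.width + p from by
      show (Finset.range (F.width + p)).card = _; simp]
    rfl
  have h4 : F.coins = ∑ i ∈ Finset.range (F.width + p), (F.rows i).card := by
    rw [F.coins_eq_sum hp (N := F.width + p - 1) (by omega),
      show F.width + p - 1 + 1 = F.width + p by omega]
  omega

lemma strip_addBottom (F : Fountain p) :
    (F.addBottom).strip (F.addBottom_primitive) = F := by
  apply ext'
  funext i
  rfl

lemma addBottom_strip (F : Fountain p) (hF : F.Primitive) :
    (F.strip hF).addBottom = F := by
  apply ext'
  funext i
  match i with
  | 0 =>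
    show Finset.range ((F.strip hF).width + p) = F.rows 0
    rw [F.strip_width hF, F.bottom_consecutive]
    congr 1
    have := hF.1
    show F.width - p + p = F.width
    omega
  | (i+1) => rfl

end Fountain

/-- `fcount p n k` = number of `(n,k)` `p`-fountains. -/
noncomputable def fcount (p n k : ℕ) : ℕ :=
  Set.ncard {F : Fountain p | F.coins = n ∧ F.width = k}

/-- `gcount p n k` = number of primitive `(n,k)` `p`-fountains. -/
noncomputable def gcount (p n k : ℕ) : ℕ :=
  Set.ncard {F : Fountain p | F.Primitive ∧ F.coins = n ∧ F.width = k}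

/-- `hcount p n k` = number of non-primitive `(n,k)` `p`-fountains. -/
noncomputable def hcount (p n k : ℕ) : ℕ :=
  Set.ncard {F : Fountain p | ¬ F.Primitive ∧ F.coins = n ∧ F.width = k}

/-- The generating function `F(q,z) = ∑ f(n,k) qⁿ zᵏ`, where `q = X 0`, `z = X 1`. -/
noncomputable def Fgf (p : ℕ) : MvPowerSeries (Fin 2) ℚ :=
  fun d => (fcount p (d 0) (d 1) : ℚ)

/-- The generating function `G(q,z) = ∑ g(n,k) qⁿ zᵏ` of primitive fountains. -/
noncomputable def Ggf (p : ℕ) : MvPowerSeries (Fin 2) ℚ :=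
  fun d => (gcount p (d 0) (d 1) : ℚ)

/-- The generating function `H(q,z) = ∑ h(n,k) qⁿ zᵏ` of non-primitive fountains. -/
noncomputable def Hgf (p : ℕ) : MvPowerSeries (Fin 2) ℚ :=
  fun d => (hcount p (d 0) (d 1) : ℚ)

/-- The substituted series `F(q, qz) = ∑ f(n,k) q^{n+k} z^k`. -/
noncomputable def Fqz (p : ℕ) : MvPowerSeries (Fin 2) ℚ :=
  fun d => if d 1 ≤ d 0 then (fcount p (d 0 - d 1) (d 1) : ℚ) else 0


def fountainEquiv (p n k : ℕ) (hp : 1 ≤ p) (hk : p ≤ k) (hn : k ≤ n) :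
    {F : Fountain p // F.Primitive ∧ F.coins = n ∧ F.width = k} ≃
      {F : Fountain p // F.coins = n - k ∧ F.width = k - p} where
  toFun F := ⟨F.1.strip F.2.1, by
    obtain ⟨hprim, hc, hw⟩ := F.2
    have h := F.1.coins_strip hp hprim
    constructor
    · omega
    · rw [F.1.strip_width hprim, hw]⟩
  invFun F := ⟨F.1.addBottom, by
    obtain ⟨hc, hw⟩ := F.2
    refine ⟨F.1.addBottom_primitive, ?_, ?_⟩
    · rw [F.1.addBottom_coins hp, hc, hw]; omega
    · rw [F.1.addBottom_width, hw]; omega⟩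
  left_inv F := Subtype.ext (F.1.addBottom_strip F.2.1)
  right_inv F := Subtype.ext (F.1.strip_addBottom)

theorem gcount_eq_fcount (p n k : ℕ) (hp : 1 ≤ p) (hk : p ≤ k) (hn : k ≤ n) :
    gcount p n k = fcount p (n - k) (k - p) := by
  unfold gcount fcount
  rw [← Nat.card_coe_set_eq, ← Nat.card_coe_set_eq]
  exact Nat.card_congr (fountainEquiv p n k hp hk hn)

theorem gcount_eq_zero_of_lt (p n k : ℕ) (h : k < p ∨ n < k) : gcount p n k = 0 := by
  unfold gcount
  convert Set.ncard_empty (Fountain p)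
  rw [Set.eq_empty_iff_forall_notMem]
  rintro F ⟨hprim, hc, hw⟩
  have := hprim.1
  have := F.width_le_coins
  omega


open MvPowerSeries in
/-- Removing the bottom row of a primitive `(n,k)` `p`-fountain yields an `(n-k, k-p)`
`p`-fountain, and this is a bijection; hence `g(n,k) = f(n-k,k-p)` for `n ≥ k ≥ p`, and
`G(q,z) = (qz)^p F(q,qz)` as formal power series (here `Fqz p` is the substituted series
`F(q,qz)`). -/
theorem primitive_remove_bottom_row (p : ℕ) (hp : 1 ≤ p) :
    (∀ n k, p ≤ k → k ≤ n →
      Nonempty ({F : Fountain p // F.Primitive ∧ F.coins = n ∧ F.width = k} ≃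
        {F : Fountain p // F.coins = n - k ∧ F.width = k - p})) ∧
    (∀ n k, p ≤ k → k ≤ n → gcount p n k = fcount p (n - k) (k - p)) ∧
    Ggf p = (X 0 * X 1) ^ p * Fqz p := by
  refine ⟨fun n k hk hn => ⟨fountainEquiv p n k hp hk hn⟩,
    fun n k hk hn => gcount_eq_fcount p n k hp hk hn, ?_⟩
  ext d
  show (gcount p (d 0) (d 1) : ℚ) = (coeff d) ((X 0 * X 1) ^ p * Fqz p)
  rw [mul_pow, X_pow_eq, X_pow_eq, monomial_mul_monomial, one_mul, coeff_monomial_mul]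
  set e : Fin 2 →₀ ℕ := Finsupp.single 0 p + Finsupp.single 1 p with he
  set n := d 0 with hn
  set k := d 1 with hk
  have he0 : e 0 = p := by simp [he]
  have he1 : e 1 = p := by simp [he]
  have hle : e ≤ d ↔ p ≤ n ∧ p ≤ k := by
    rw [Finsupp.le_def]
    constructor
    · intro h
      exact ⟨by have := h 0; rwa [he0] at this, by have := h 1; rwa [he1] at this⟩
    · rintro ⟨h1, h2⟩ s
      match s with
      | 0 => rwa [he0]
      | 1 => rwa [he1]
  have hd0 : (d - e) 0 = n - p := by rw [Finsupp.tsub_apply, he0]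
  have hd1 : (d - e) 1 = k - p := by rw [Finsupp.tsub_apply, he1]
  have hcoeff : (coeff (d - e)) (Fqz p)
      = if k - p ≤ n - p then (fcount p ((n - p) - (k - p)) (k - p) : ℚ) else 0 := by
    show (if (d - e) 1 ≤ (d - e) 0
      then (fcount p ((d - e) 0 - (d - e) 1) ((d - e) 1) : ℚ) else 0) = _
    rw [hd0, hd1]
  rw [hcoeff]
  split_ifs with h1 h2
  · obtain ⟨hpn, hpk⟩ := hle.1 h1
    have hkn : k ≤ n := by omega
    rw [gcount_eq_fcount p n k hp hpk hkn, one_mul,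
      show (n - p) - (k - p) = n - k by omega]
  · obtain ⟨hpn, hpk⟩ := hle.1 h1
    rw [gcount_eq_zero_of_lt p n k (by omega)]
    simp
  · rw [hle] at h1
    rw [gcount_eq_zero_of_lt p n k (by omega)]
    simp
end

section
/- The Jacobi triple product identity holds: prod_{n>=1} (1 + z q^n)(1 + z^{-1} q^{n-1})(1 - q^n) = sum_{j=-infinity}^{infinity} z^j q^{binom(j+1,2)}, as an identity of formal Laurent series (or of convergent series for |q|<1, z ≠ 0). -/
open Finset Filter Complex Topology

namespace JTP

noncomputable def Dq (q : ℂ) (m : ℕ) : ℂ := ∏ i ∈ Finset.range m, (1 - q ^ (i+1))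

noncomputable def gb (q : ℂ) (m k : ℕ) : ℂ :=
  if k ≤ m then Dq q m / (Dq q k * Dq q (m-k)) else 0

noncomputable def cc (q : ℂ) (N : ℕ) (j : ℤ) : ℂ :=
  if -(N:ℤ) ≤ j then gb q (2*N) (N + j).toNat else 0

def T (j : ℤ) : ℤ := j*(j+1)/2

lemma two_T (j : ℤ) : T j * 2 = j * (j+1) :=
  Int.ediv_mul_cancel (Int.even_mul_succ_self j).two_dvd

lemma T_nonneg (j : ℤ) : 0 ≤ T j := by
  have h2 := two_T j
  rcases le_or_gt 0 j with h | h
  · nlinarith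
  · nlinarith

lemma T_succ (j : ℤ) : T (j+1) = T j + (j+1) := by
  have h1 := two_T j
  have h2 := two_T (j+1)
  have h3 : (j+1) * (j+1+1) = j*(j+1) + 2*(j+1) := by ring
  omega

lemma T_pred (j : ℤ) : T (j-1) = T j - j := by
  have h := T_succ (j-1)
  have h2 : j - 1 + 1 = j := by ring
  rw [h2] at h
  omega

lemma Dq_zero (q : ℂ) : Dq q 0 = 1 := by simp [Dq]

lemma Dq_succ (q : ℂ) (m : ℕ) : Dq q (m+1) = Dq q m * (1 - q ^ (m+1)) :=
  Finset.prod_range_succ _ _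

lemma Dq_factor_ne (hq : ‖q‖ < 1) (i : ℕ) : (1 : ℂ) - q ^ (i+1) ≠ 0 := by
  intro h
  have h1 : q ^ (i+1) = 1 := by linear_combination -h
  have : ‖q ^ (i+1)‖ < 1 := by
    rw [norm_pow]
    calc ‖q‖ ^ (i+1) ≤ ‖q‖ ^ 1 := by
          apply pow_le_pow_of_le_one (norm_nonneg q) hq.le; omega
      _ < 1 := by simpa using hq
  rw [h1] at this; simp at this

lemma Dq_ne (hq : ‖q‖ < 1) (m : ℕ) : Dq q m ≠ 0 := by
  refine Finset.prod_ne_zero_iff.mpr fun i _ => Dq_factor_ne hq i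

lemma gb_zero_right (hq : ‖q‖ < 1) (m : ℕ) : gb q m 0 = 1 := by
  simp [gb, Dq_zero, div_self (Dq_ne hq m)]

lemma gb_self (hq : ‖q‖ < 1) (m : ℕ) : gb q m m = 1 := by
  simp [gb, Dq_zero, div_self (Dq_ne hq m)]

lemma gb_eq_zero {m k : ℕ} (h : m < k) : gb q m k = 0 := by
  simp [gb, not_le.mpr h]

end JTP

namespace JTP

lemma pascalA (hq : ‖q‖ < 1) (m k : ℕ) :
    gb q (m+1) (k+1) = gb q m (k+1) + q^(m-k) * gb q m k := by
  rcases lt_or_ge m (k+1) with h | h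
  · rcases eq_or_lt_of_le (Nat.lt_succ_iff.mp h) with rfl | hlt
    · rw [gb_self hq, gb_eq_zero (by omega), gb_self hq]
      simp
    · rw [gb_eq_zero (by omega), gb_eq_zero (by omega), gb_eq_zero (by omega)]
      simp
  · obtain ⟨r, rfl⟩ : ∃ r, m = k + 1 + r := ⟨m - (k+1), by omega⟩
    simp only [gb, if_pos (by omega : k+1 ≤ k+1+r+1), if_pos (by omega : k+1 ≤ k+1+r),
      if_pos (by omega : k ≤ k+1+r)]
    rw [(by omega : k+1+r+1 - (k+1) = r+1), (by omega : k+1+r - (k+1) = r),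
      (by omega : k+1+r - k = r+1)]
    rw [(by omega : k+1+r+1 = (k+1+r)+1), Dq_succ q (k+1+r), Dq_succ q k, Dq_succ q r]
    have hvq : (q:ℂ)^(k+1+r+1) = q^(r+1) * q^(k+1) := by rw [← pow_add]; congr 1; omega
    rw [hvq]
    have n1 := Dq_ne hq (q := q) (k+1+r)
    have n2 := Dq_ne hq (q := q) k
    have n3 := Dq_ne hq (q := q) r
    have n4 := Dq_factor_ne hq (q := q) k
    have n5 := Dq_factor_ne hq (q := q) r
    field_simp
    ring

lemma pascalB (hq : ‖q‖ < 1) (m k : ℕ) :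
    gb q (m+1) (k+1) = q^(k+1) * gb q m (k+1) + gb q m k := by
  rcases lt_or_ge m (k+1) with h | h
  · rcases eq_or_lt_of_le (Nat.lt_succ_iff.mp h) with rfl | hlt
    · rw [gb_self hq, gb_eq_zero (by omega), gb_self hq]
      simp
    · rw [gb_eq_zero (by omega), gb_eq_zero (by omega), gb_eq_zero (by omega)]
      simp
  · obtain ⟨r, rfl⟩ : ∃ r, m = k + 1 + r := ⟨m - (k+1), by omega⟩
    simp only [gb, if_pos (by omega : k+1 ≤ k+1+r+1), if_pos (by omega : k+1 ≤ k+1+r),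
      if_pos (by omega : k ≤ k+1+r)]
    rw [(by omega : k+1+r+1 - (k+1) = r+1), (by omega : k+1+r - (k+1) = r),
      (by omega : k+1+r - k = r+1)]
    rw [(by omega : k+1+r+1 = (k+1+r)+1), Dq_succ q (k+1+r), Dq_succ q k, Dq_succ q r]
    have hvq : (q:ℂ)^(k+1+r+1) = q^(r+1) * q^(k+1) := by rw [← pow_add]; congr 1; omega
    rw [hvq]
    have n1 := Dq_ne hq (q := q) (k+1+r)
    have n2 := Dq_ne hq (q := q) k
    have n3 := Dq_ne hq (q := q) r
    have n4 := Dq_factor_ne hq (q := q) k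
    have n5 := Dq_factor_ne hq (q := q) r
    field_simp
    ring

lemma key2 (hq : ‖q‖ < 1) (m k : ℕ) :
    gb q (m+2) (k+2) = q^(k+2) * gb q m (k+2) + (1+q^(m+1)) * gb q m (k+1)
      + q^(m-k) * gb q m k := by
  rcases lt_or_ge m (k+1) with h | h
  · rcases eq_or_lt_of_le (Nat.lt_succ_iff.mp h) with rfl | hlt
    · rw [gb_self hq, gb_eq_zero (by omega), gb_eq_zero (by omega), gb_self hq]
      simp
    · rw [gb_eq_zero (by omega), gb_eq_zero (by omega), gb_eq_zero (by omega),
        gb_eq_zero (by omega)]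
      simp
  · have hB := pascalB hq (m+1) (k+1)
    have hA1 := pascalA hq m (k+1)
    have hA2 := pascalA hq m k
    rw [(by omega : m+1+1 = m+2), (by omega : k+1+1 = k+2)] at hB
    rw [hB, hA1, hA2]
    have e : (q:ℂ)^(k+2) * q^(m-(k+1)) = q^(m+1) := by rw [← pow_add]; congr 1; omega
    linear_combination (gb q m (k+1)) * e

end JTP

namespace JTP

lemma cc_eq_zero_of_lt {q : ℂ} {N : ℕ} {j : ℤ} (h : j < -(N:ℤ)) : cc q N j = 0 := by
  simp [cc, not_le.mpr h]

lemma cc_eq_zero_of_gt {q : ℂ} {N : ℕ} {j : ℤ} (h : (N:ℤ) < j) : cc q N j = 0 := by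
  rw [cc, if_pos (by omega), gb_eq_zero (by omega)]

lemma cc_eq {q : ℂ} {N : ℕ} {j : ℤ} (h : -(N:ℤ) ≤ j) :
    cc q N j = gb q (2*N) (N + j).toNat := if_pos h

lemma ccRec (hq : ‖q‖ < 1) (N : ℕ) (j : ℤ) :
    cc q (N+1) j = cc q N (j+1) * q ^ ((N:ℤ)+1+j) + cc q N j * (1 + q^(2*N+1))
      + cc q N (j-1) * q ^ ((N:ℤ)+1-j) := by
  rcases lt_or_ge ((N:ℤ)+1) j with hb | hb
  · -- j ≥ N+2 : everything vanishes
    rw [cc_eq_zero_of_gt (by push_cast; omega), cc_eq_zero_of_gt (by omega),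
      cc_eq_zero_of_gt (by omega), cc_eq_zero_of_gt (by omega)]
    ring
  rcases lt_or_ge j (-(N:ℤ)-1) with he | he
  · -- j < -(N+1)
    rw [cc_eq_zero_of_lt (by push_cast; omega), cc_eq_zero_of_lt (by omega),
      cc_eq_zero_of_lt (by omega), cc_eq_zero_of_lt (by omega)]
    ring
  rcases eq_or_lt_of_le he with hd | hd
  · -- j = -(N+1)
    have hj : j = -(N:ℤ)-1 := hd.symm
    subst hj
    rw [cc_eq_zero_of_lt (q := q) (N := N) (j := -(N:ℤ)-1) (by omega),
      cc_eq_zero_of_lt (q := q) (N := N) (j := -(N:ℤ)-1-1) (by omega)]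
    rw [cc_eq (N := N+1) (by push_cast; omega), cc_eq (by omega)]
    rw [(by omega : ((((N:ℕ)+1 : ℕ) : ℤ) + (-(N:ℤ)-1)).toNat = 0),
      (by omega : ((N:ℤ) + (-(N:ℤ)-1+1)).toNat = 0)]
    rw [gb_zero_right hq, gb_zero_right hq]
    rw [(by push_cast; ring : (N:ℤ)+1+(-(N:ℤ)-1) = 0), zpow_zero]
    ring
  rcases eq_or_lt_of_le (by omega : -(N:ℤ) ≤ j) with hc | hc
  · -- j = -N
    have hj : j = -(N:ℤ) := hc.symm
    subst hj
    rw [cc_eq_zero_of_lt (q := q) (N := N) (j := -(N:ℤ)-1) (by omega)]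
    rw [cc_eq (N := N+1) (by push_cast; omega), cc_eq (by omega), cc_eq (by omega)]
    rw [(by omega : ((((N:ℕ)+1 : ℕ) : ℤ) + (-(N:ℤ))).toNat = 1),
      (by omega : ((N:ℤ) + (-(N:ℤ)+1)).toNat = 1),
      (by omega : ((N:ℤ) + -(N:ℤ)).toNat = 0)]
    rw [(by push_cast; ring : (N:ℤ)+1+(-(N:ℤ)) = 1), zpow_one, gb_zero_right hq]
    have hB := pascalB hq (2*N+1) 0
    have hA := pascalA hq (2*N) 0
    rw [(by omega : 2*N+1+1 = 2*(N+1)), (by omega : 0+1 = 1)] at hB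
    rw [(by omega : 0+1 = 1)] at hA
    rw [hB, hA, gb_zero_right hq, gb_zero_right hq]
    rw [(by omega : 2*N-0 = 2*N)]
    ring
  · -- main case : 1-N ≤ j ≤ N+1
    set k : ℕ := (N + j - 1).toNat with hkdef
    have hk : (k:ℤ) = N + j - 1 := Int.toNat_of_nonneg (by omega)
    rw [cc_eq (N := N+1) (by push_cast; omega), cc_eq (by omega), cc_eq (by omega),
      cc_eq (by omega)]
    rw [(by omega : ((((N:ℕ)+1 : ℕ) : ℤ) + j).toNat = k+2),
      (by omega : ((N:ℤ) + (j+1)).toNat = k+2),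
      (by omega : ((N:ℤ) + j).toNat = k+1), (by omega : ((N:ℤ) + (j-1)).toNat = k)]
    rw [(by push_cast; omega : ((N:ℤ)+1+j) = ((k+2 : ℕ) : ℤ)), zpow_natCast,
      (by push_cast; omega : ((N:ℤ)+1-j) = ((2*N-k : ℕ) : ℤ)), zpow_natCast]
    rw [(by omega : 2*(N+1) = 2*N+2)]
    rw [key2 hq (2*N) k]
    ring

end JTP

namespace JTP

lemma prodId (hq : ‖q‖ < 1) (hq0 : q ≠ 0) {z : ℂ} (hz : z ≠ 0) (N : ℕ) :
    ∏ n ∈ Finset.range N, ((1 + z*q^(n+1)) * (1 + z⁻¹ * q^n))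
      = ∑ j ∈ Finset.Icc (-(N:ℤ)) (N:ℤ), cc q N j * z ^ j * q ^ (T j) := by
  induction N with
  | zero =>
      simp only [Nat.cast_zero, neg_zero, Finset.Icc_self, Finset.sum_singleton,
        Finset.range_zero, Finset.prod_empty]
      rw [cc_eq (by omega), (by omega : (((0:ℕ):ℤ) + 0).toNat = 0), gb_zero_right hq]
      simp [T]
  | succ N ih =>
      rw [Finset.prod_range_succ, ih]
      rw [show (-(((N+1 : ℕ) : ℕ) : ℤ)) = -(N:ℤ)-1 by push_cast; ring,
        show ((((N+1 : ℕ) : ℕ)) : ℤ) = (N:ℤ)+1 by push_cast; ring]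
      -- rewrite each new coefficient via the recurrence
      have step1 : ∑ j ∈ Finset.Icc (-(N:ℤ)-1) ((N:ℤ)+1), cc q (N+1) j * z ^ j * q ^ (T j)
          = (∑ j ∈ Finset.Icc (-(N:ℤ)-1) ((N:ℤ)+1),
                cc q N (j+1) * q ^ ((N:ℤ)+1+j) * z ^ j * q ^ (T j))
            + ((∑ j ∈ Finset.Icc (-(N:ℤ)-1) ((N:ℤ)+1),
                cc q N j * (1 + q^(2*N+1)) * z ^ j * q ^ (T j))
            + ∑ j ∈ Finset.Icc (-(N:ℤ)-1) ((N:ℤ)+1),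
                cc q N (j-1) * q ^ ((N:ℤ)+1-j) * z ^ j * q ^ (T j)) := by
        rw [← Finset.sum_add_distrib, ← Finset.sum_add_distrib]
        refine Finset.sum_congr rfl fun j _ => ?_
        rw [ccRec hq N j]
        ring
      rw [step1]
      -- middle sum
      have hB : (∑ j ∈ Finset.Icc (-(N:ℤ)-1) ((N:ℤ)+1),
            cc q N j * (1 + q^(2*N+1)) * z ^ j * q ^ (T j))
          = (∑ j ∈ Finset.Icc (-(N:ℤ)) (N:ℤ), cc q N j * z ^ j * q ^ (T j)) * (1 + q^(2*N+1)) := by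
        rw [Finset.sum_mul]
        refine (Finset.sum_subset (Finset.Icc_subset_Icc (by omega) (by omega))
          (fun x _ hx => ?_)).symm.trans (Finset.sum_congr rfl fun j _ => by ring)
        rcases lt_or_ge x (-(N:ℤ)) with h | h
        · rw [cc_eq_zero_of_lt h]; ring
        · rw [cc_eq_zero_of_gt (by simp only [Finset.mem_Icc] at hx; omega)]; ring
      -- first sum : shift down
      have hA : (∑ j ∈ Finset.Icc (-(N:ℤ)-1) ((N:ℤ)+1),
            cc q N (j+1) * q ^ ((N:ℤ)+1+j) * z ^ j * q ^ (T j))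
          = (∑ j ∈ Finset.Icc (-(N:ℤ)) (N:ℤ), cc q N j * z ^ j * q ^ (T j)) * (z⁻¹ * q^N) := by
        have hmap : Finset.Icc (-(N:ℤ)-1) ((N:ℤ)+1)
            = (Finset.Icc (-(N:ℤ)) ((N:ℤ)+2)).map (addRightEmbedding (-1)) := by
          rw [Finset.map_add_right_Icc]; congr 1 <;> ring
        rw [hmap, Finset.sum_map, Finset.sum_mul]
        simp only [addRightEmbedding_apply]
        refine (Finset.sum_subset (Finset.Icc_subset_Icc (by omega) (by omega))
          (fun x hx' hx => ?_)).symm.trans (Finset.sum_congr rfl fun i hi => ?_)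
        · rw [show x + -1 + 1 = x by ring,
            cc_eq_zero_of_gt (by simp only [Finset.mem_Icc] at hx hx'; omega)]
          ring
        · rw [show i + -1 + 1 = i by ring]
          rw [zpow_add₀ hz i (-1), zpow_neg_one]
          have e2 : (q:ℂ)^((N:ℤ)+1+(i + -1)) * q^(T (i + -1)) = q^(N:ℕ) * q^(T i) := by
            rw [← zpow_natCast q N, ← zpow_add₀ hq0, ← zpow_add₀ hq0]
            congr 1
            have h1 := T_pred i
            have h2 : i + -1 = i - 1 := by ring
            rw [h2]
            omega
          linear_combination (cc q N i * z^i * z⁻¹) * e2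
      -- third sum : shift up
      have hC : (∑ j ∈ Finset.Icc (-(N:ℤ)-1) ((N:ℤ)+1),
            cc q N (j-1) * q ^ ((N:ℤ)+1-j) * z ^ j * q ^ (T j))
          = (∑ j ∈ Finset.Icc (-(N:ℤ)) (N:ℤ), cc q N j * z ^ j * q ^ (T j)) * (z * q^(N+1)) := by
        have hmap : Finset.Icc (-(N:ℤ)-1) ((N:ℤ)+1)
            = (Finset.Icc (-(N:ℤ)-2) ((N:ℤ))).map (addRightEmbedding 1) := by
          rw [Finset.map_add_right_Icc]; congr 1 <;> ring
        rw [hmap, Finset.sum_map, Finset.sum_mul]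
        simp only [addRightEmbedding_apply]
        refine (Finset.sum_subset (Finset.Icc_subset_Icc (by omega) (by omega))
          (fun x hx' hx => ?_)).symm.trans (Finset.sum_congr rfl fun i hi => ?_)
        · rw [show x + 1 - 1 = x by ring,
            cc_eq_zero_of_lt (by simp only [Finset.mem_Icc] at hx hx'; omega)]
          ring
        · rw [show i + 1 - 1 = i by ring]
          rw [zpow_add₀ hz i 1, zpow_one]
          have e2 : (q:ℂ)^((N:ℤ)+1-(i + 1)) * q^(T (i + 1)) = q^((N+1 : ℕ)) * q^(T i) := by
            rw [← zpow_natCast q (N+1), ← zpow_add₀ hq0, ← zpow_add₀ hq0]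
            congr 1
            have h1 := T_succ i
            push_cast
            omega
          linear_combination (cc q N i * z^i * z) * e2
      rw [hA, hB, hC]
      have hzz : z * z⁻¹ = 1 := mul_inv_cancel₀ hz
      have hqq : (q:ℂ)^(N+1) * q^N = q^(2*N+1) := by rw [← pow_add]; congr 1; omega
      set SN := ∑ j ∈ Finset.Icc (-(N:ℤ)) (N:ℤ), cc q N j * z ^ j * q ^ (T j) with hSN
      linear_combination SN * q^(N+1) * q^N * hzz + SN * hqq

end JTP

namespace JTP

lemma summable_norm_log_of_bound {f : ℕ → ℂ} {c r : ℝ} (hr0 : 0 ≤ r) (hr1 : r < 1)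
    (hb : ∀ᶠ n in Filter.atTop, ‖f n - 1‖ ≤ c * r ^ n) :
    Summable (fun n => ‖Complex.log (f n)‖) := by
  refine Summable.of_norm_bounded_eventually_nat (g := fun n => 3/2 * (c * r^n))
    (((summable_geometric_of_lt_one hr0 hr1).mul_left c).mul_left (3/2)) ?_
  have h0 : Filter.Tendsto (fun n : ℕ => c * r ^ n) Filter.atTop (𝓝 (c * 0)) :=
    (tendsto_pow_atTop_nhds_zero_of_lt_one hr0 hr1).const_mul c
  rw [mul_zero] at h0
  filter_upwards [hb, h0.eventually_lt_const (by norm_num : (0:ℝ) < 1/2)] with n h1 h2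
  have hle : ‖f n - 1‖ ≤ 1/2 := le_trans h1 h2.le
  have : ‖Complex.log (1 + (f n - 1))‖ ≤ 3/2 * ‖f n - 1‖ :=
    Complex.norm_log_one_add_half_le_self hle
  rw [show (1 : ℂ) + (f n - 1) = f n by ring] at this
  rw [norm_norm]
  calc ‖Complex.log (f n)‖ ≤ 3/2 * ‖f n - 1‖ := this
    _ ≤ 3/2 * (c * r^n) := by linarith

lemma Dq_props (hq : ‖q‖ < 1) : ∃ (L : ℂ) (δ U : ℝ), L ≠ 0 ∧
    Filter.Tendsto (Dq q) Filter.atTop (𝓝 L) ∧ 0 < δ ∧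
    (∀ m, δ ≤ ‖Dq q m‖) ∧ (∀ m, ‖Dq q m‖ ≤ U) := by
  set lg : ℕ → ℂ := fun i => Complex.log (1 - q^(i+1)) with hlg
  have hnb : ∀ᶠ n in Filter.atTop, ‖(1 - q^(n+1)) - 1‖ ≤ ‖q‖ * ‖q‖ ^ n := by
    filter_upwards with n
    rw [show (1 : ℂ) - q^(n+1) - 1 = -(q^(n+1)) by ring, norm_neg, norm_pow, pow_succ]
    ring_nf
    exact le_refl _
  have hsn : Summable (fun n => ‖lg n‖) :=
    summable_norm_log_of_bound (norm_nonneg q) hq hnb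
  have hs : Summable lg := hsn.of_norm
  set Sl : ℝ := ∑' i, ‖lg i‖ with hSl
  have hSl0 : 0 ≤ Sl := tsum_nonneg fun i => norm_nonneg _
  have hDexp : ∀ m, Dq q m = Complex.exp (∑ i ∈ Finset.range m, lg i) := by
    intro m
    rw [Complex.exp_sum]
    exact Finset.prod_congr rfl fun i _ => (Complex.exp_log (Dq_factor_ne hq i)).symm
  have hre : ∀ m, |(∑ i ∈ Finset.range m, lg i).re| ≤ Sl := by
    intro m
    have h1 : |(∑ i ∈ Finset.range m, lg i).re| ≤ ‖∑ i ∈ Finset.range m, lg i‖ := by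
      exact Complex.abs_re_le_norm _
    refine le_trans h1 ?_
    refine le_trans (norm_sum_le _ _) ?_
    exact Summable.sum_le_tsum _ (fun i _ => norm_nonneg _) hsn
  refine ⟨Complex.exp (∑' i, lg i), Real.exp (-Sl), Real.exp Sl, Complex.exp_ne_zero _, ?_, 
    Real.exp_pos _, ?_, ?_⟩
  · have h1 : Filter.Tendsto (fun m => ∑ i ∈ Finset.range m, lg i)
        Filter.atTop (𝓝 (∑' i, lg i)) := hs.hasSum.tendsto_sum_nat
    exact Filter.Tendsto.congr (fun m => (hDexp m).symm) h1.cexp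
  · intro m
    rw [hDexp m, Complex.norm_exp, Real.exp_le_exp]
    have := hre m
    cases abs_le.mp this
    linarith
  · intro m
    rw [hDexp m, Complex.norm_exp, Real.exp_le_exp]
    have := hre m
    cases abs_le.mp this
    linarith

end JTP

namespace JTP

lemma cc_bound (hq : ‖q‖ < 1) {d U : ℝ} (hd : 0 < d) (hlow : ∀ m, d ≤ ‖Dq q m‖)
    (hup : ∀ m, ‖Dq q m‖ ≤ U) (N : ℕ) (j : ℤ) :
    ‖Dq q N * cc q N j‖ ≤ U*U/(d*d) := by
  have hU : 0 < U := lt_of_lt_of_le hd (le_trans (hlow 0) (hup 0))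
  by_cases h1 : -(N:ℤ) ≤ j
  · by_cases h2 : ((N:ℤ)+j).toNat ≤ 2*N
    · rw [cc_eq h1, gb, if_pos h2]
      rw [norm_mul, norm_div, norm_mul, ← mul_div_assoc]
      refine div_le_div₀ (by positivity)
        (mul_le_mul (hup N) (hup (2*N)) (norm_nonneg _) hU.le) (by positivity)
        (mul_le_mul (hlow _) (hlow _) hd.le (norm_nonneg _))
    · rw [cc_eq h1, gb_eq_zero (by omega), mul_zero, norm_zero]
      positivity
  · rw [cc, if_neg h1, mul_zero, norm_zero]
    positivity

lemma cc_tendsto (hq : ‖q‖ < 1) {L : ℂ} (hL : L ≠ 0)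
    (hDlim : Filter.Tendsto (Dq q) Filter.atTop (𝓝 L)) (j : ℤ) :
    Filter.Tendsto (fun N => Dq q N * cc q N j) Filter.atTop (𝓝 1) := by
  have h2 : Filter.Tendsto (fun N : ℕ => Dq q (2*N)) Filter.atTop (𝓝 L) :=
    hDlim.comp (Filter.tendsto_atTop_atTop.mpr fun b => ⟨b, fun a ha => by omega⟩)
  have hA : Filter.Tendsto (fun N : ℕ => Dq q ((N:ℤ)+j).toNat) Filter.atTop (𝓝 L) :=
    hDlim.comp (Filter.tendsto_atTop_atTop.mpr fun b => ⟨b + j.natAbs, fun a ha => by omega⟩)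
  have hB : Filter.Tendsto (fun N : ℕ => Dq q ((N:ℤ)-j).toNat) Filter.atTop (𝓝 L) :=
    hDlim.comp (Filter.tendsto_atTop_atTop.mpr fun b => ⟨b + j.natAbs, fun a ha => by omega⟩)
  have hLL : L * L ≠ 0 := mul_ne_zero hL hL
  have hG : Filter.Tendsto (fun N : ℕ => Dq q N * Dq q (2*N)
      / (Dq q ((N:ℤ)+j).toNat * Dq q ((N:ℤ)-j).toNat)) Filter.atTop (𝓝 (L*L/(L*L))) :=
    (hDlim.mul h2).div (hA.mul hB) hLL
  rw [div_self hLL] at hG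
  refine Filter.Tendsto.congr' ?_ hG
  filter_upwards [Filter.eventually_ge_atTop j.natAbs] with N hN
  rw [cc_eq (by omega), gb, if_pos (by omega)]
  rw [(by omega : 2*N - ((N:ℤ)+j).toNat = ((N:ℤ)-j).toNat), mul_div_assoc]

lemma w_summable (hq : ‖q‖ < 1) (hq0 : q ≠ 0) {z : ℂ} (hz : z ≠ 0) :
    Summable (fun j : ℤ => ‖z ^ j * q ^ (T j)‖) := by
  have hq1 : ∀ n : ℕ, ‖q‖^(n+1) ≤ ‖q‖^n := fun n => by
    rw [pow_succ]
    nlinarith [pow_nonneg (norm_nonneg q) n, norm_nonneg q]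
  apply Summable.of_nat_of_neg
  · -- positive side
    apply summable_of_ratio_norm_eventually_le (r := 1/2) (by norm_num)
    have h0 : Filter.Tendsto (fun n : ℕ => ‖z‖ * ‖q‖ ^ n) Filter.atTop (𝓝 (‖z‖ * 0)) :=
      (tendsto_pow_atTop_nhds_zero_of_lt_one (norm_nonneg q) hq).const_mul ‖z‖
    rw [mul_zero] at h0
    filter_upwards [h0.eventually_lt_const (by norm_num : (0:ℝ) < 1/2)] with n hn
    have key : ‖z ^ ((n:ℤ)+1) * q ^ (T ((n:ℤ)+1))‖
        = (‖z‖ * ‖q‖^(n+1)) * ‖z ^ (n:ℤ) * q ^ (T (n:ℤ))‖ := by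
      have e1 : z ^ ((n:ℤ)+1) = z ^ (n:ℤ) * z := by rw [zpow_add₀ hz, zpow_one]
      have e2 : q ^ (T ((n:ℤ)+1)) = q ^ (T (n:ℤ)) * q ^ ((n+1 : ℕ)) := by
        rw [T_succ, zpow_add₀ hq0, ← zpow_natCast q (n+1)]
        norm_num
      rw [e1, e2]
      simp only [norm_mul, norm_pow]
      ring
    rw [norm_norm, norm_norm, show ((n+1 : ℕ) : ℤ) = (n:ℤ)+1 by push_cast; ring, key]
    have hnn : (0:ℝ) ≤ ‖z ^ (n:ℤ) * q ^ (T (n:ℤ))‖ := norm_nonneg _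
    have : ‖z‖ * ‖q‖^(n+1) ≤ 1/2 := le_trans
      (mul_le_mul_of_nonneg_left (hq1 n) (norm_nonneg z)) hn.le
    nlinarith
  · -- negative side
    apply summable_of_ratio_norm_eventually_le (r := 1/2) (by norm_num)
    have h0 : Filter.Tendsto (fun n : ℕ => ‖z⁻¹‖ * ‖q‖ ^ n) Filter.atTop (𝓝 (‖z⁻¹‖ * 0)) :=
      (tendsto_pow_atTop_nhds_zero_of_lt_one (norm_nonneg q) hq).const_mul ‖z⁻¹‖
    rw [mul_zero] at h0
    filter_upwards [h0.eventually_lt_const (by norm_num : (0:ℝ) < 1/2)] with n hn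
    have key : ‖z ^ (-((n:ℤ)+1)) * q ^ (T (-((n:ℤ)+1)))‖
        = (‖z⁻¹‖ * ‖q‖^n) * ‖z ^ (-(n:ℤ)) * q ^ (T (-(n:ℤ)))‖ := by
      have hT : T (-((n:ℤ)+1)) = T (-(n:ℤ)) + n := by
        have := T_pred (-(n:ℤ))
        have h2 : -((n:ℤ)+1) = -(n:ℤ) - 1 := by ring
        rw [h2]
        omega
      have e1 : z ^ (-((n:ℤ)+1)) = z ^ (-(n:ℤ)) * z⁻¹ := by
        rw [show -((n:ℤ)+1) = -(n:ℤ) + (-1) by ring, zpow_add₀ hz, zpow_neg_one]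
      have e2 : q ^ (T (-((n:ℤ)+1))) = q ^ (T (-(n:ℤ))) * q ^ (n : ℕ) := by
        rw [hT, zpow_add₀ hq0, ← zpow_natCast q n]
      rw [e1, e2]
      simp only [norm_mul, norm_pow]
      ring
    rw [norm_norm, norm_norm, show (-((n+1 : ℕ) : ℤ)) = -((n:ℤ)+1) by push_cast; ring, key]
    have hnn : (0:ℝ) ≤ ‖z ^ (-(n:ℤ)) * q ^ (T (-(n:ℤ)))‖ := norm_nonneg _
    nlinarith
end JTP


open JTP

/-- The Jacobi triple product identity
`∏_{n≥1} (1 + z qⁿ)(1 + z⁻¹ qⁿ⁻¹)(1 - qⁿ) = ∑_{j∈ℤ} zʲ q^{j(j+1)/2}`,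
stated for convergent series: `|q| < 1`, `z ≠ 0`. Note that `j(j+1)/2 ≥ 0` for every
integer `j`, so `q^{j(j+1)/2}` is a natural power. -/
theorem jacobi_triple_product (q z : ℂ) (hq : ‖q‖ < 1) (hz : z ≠ 0) :
    ∏' n : ℕ, ((1 + z * q ^ (n + 1)) * (1 + z⁻¹ * q ^ n) * (1 - q ^ (n + 1))) =
      ∑' j : ℤ, z ^ j * q ^ (j * (j + 1) / 2).toNat := by
  rcases eq_or_ne q 0 with rfl | hq0
  · -- trivial case q = 0
    have hL : ∏' n : ℕ, ((1 + z * (0:ℂ) ^ (n + 1)) * (1 + z⁻¹ * (0:ℂ) ^ n) * (1 - (0:ℂ) ^ (n + 1)))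
        = 1 + z⁻¹ := by
      rw [tprod_eq_mulSingle 0 ?_]
      · norm_num
      · intro n hn
        have h1 : (0:ℂ) ^ (n+1) = 0 := zero_pow (by omega)
        have h2 : (0:ℂ) ^ n = 0 := zero_pow hn
        rw [h1, h2]
        ring
    have hR : ∑' j : ℤ, z ^ j * (0:ℂ) ^ (j * (j + 1) / 2).toNat = 1 + z⁻¹ := by
      rw [tsum_eq_sum (s := {0, -1}) ?_]
      · rw [Finset.sum_insert (by norm_num), Finset.sum_singleton]
        norm_num
      · intro j hj
        simp only [Finset.mem_insert, Finset.mem_singleton] at hj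
        push_neg at hj
        have h1 : (1:ℤ) ≤ j * (j + 1) / 2 := by
          have h2 := two_T j
          have h3 : 2 ≤ j * (j+1) := by
            rcases lt_or_ge j 0 with h | h
            · have h4 := mul_le_mul (by omega : (2:ℤ) ≤ -j) (by omega : (1:ℤ) ≤ -(j+1))
                (by omega) (by omega)
              nlinarith [h4]
            · have h4 := mul_le_mul (by omega : (1:ℤ) ≤ j) (by omega : (2:ℤ) ≤ j+1)
                (by omega) (by omega)
              nlinarith [h4]
          simp only [T] at h2
          omega
        rw [zero_pow (by omega), mul_zero]
    rw [hL, hR]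
  · -- main case
    obtain ⟨L, d, U, hL, hDlim, hdpos, hlow, hup⟩ := Dq_props hq
    set w : ℤ → ℂ := fun j => z ^ j * q ^ (T j) with hw
    set S : ℂ := ∑' j, w j with hS
    set a : ℕ → ℂ := fun n => (1 + z * q ^ (n + 1)) * (1 + z⁻¹ * q ^ n) * (1 - q ^ (n + 1))
      with ha
    have hpart : ∀ N, ∏ n ∈ Finset.range N, a n
        = ∑' j : ℤ, (Dq q N * cc q N j) * w j := by
      intro N
      have h1 : ∏ n ∈ Finset.range N, a n
          = (∏ n ∈ Finset.range N, ((1 + z * q ^ (n+1)) * (1 + z⁻¹ * q ^ n))) * Dq q N := by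
        rw [Dq, ← Finset.prod_mul_distrib]
      rw [h1, prodId hq hq0 hz]
      have h2 : ∑' j : ℤ, (Dq q N * cc q N j) * w j
          = ∑ j ∈ Finset.Icc (-(N:ℤ)) (N:ℤ), (Dq q N * cc q N j) * w j := by
        refine tsum_eq_sum fun j hj => ?_
        rw [Finset.mem_Icc] at hj
        rcases lt_or_ge j (-(N:ℤ)) with h | h
        · rw [cc_eq_zero_of_lt h]; ring
        · rw [cc_eq_zero_of_gt (by omega)]; ring
      rw [h2, Finset.sum_mul]
      exact Finset.sum_congr rfl fun j _ => by rw [hw]; ring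
    have hTend : Filter.Tendsto (fun N => ∏ n ∈ Finset.range N, a n) Filter.atTop (𝓝 S) := by
      have hdom := tendsto_tsum_of_dominated_convergence (𝓕 := Filter.atTop)
        (f := fun N (j : ℤ) => (Dq q N * cc q N j) * w j) (g := w)
        (bound := fun j => (U*U/(d*d)) * ‖w j‖)
        ((w_summable hq hq0 hz).mul_left _) ?_ ?_
      · exact Filter.Tendsto.congr (fun N => (hpart N).symm) hdom
      · intro j
        have := (cc_tendsto hq hL hDlim j).mul_const (w j)
        rwa [one_mul] at this
      · filter_upwards with N j
        rw [norm_mul]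
        exact mul_le_mul_of_nonneg_right (cc_bound hq hdpos hlow hup N j) (norm_nonneg _)
    have hconv : ∑' j : ℤ, z ^ j * q ^ (j * (j + 1) / 2).toNat = S := by
      refine tsum_congr fun j => ?_
      have hnn := T_nonneg j
      simp only [T] at hnn
      simp only [hw, T]
      rw [← zpow_natCast q ((j*(j+1)/2).toNat), Int.toNat_of_nonneg hnn]
    rw [hconv]
    by_cases hZero : ∃ n, a n = 0
    · obtain ⟨n₀, hn₀⟩ := hZero
      have hP0 : HasProd a 0 := by
        have hev : (fun s : Finset ℕ => ∏ i ∈ s, a i) =ᶠ[Filter.atTop] (fun _ => 0) := by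
          filter_upwards [Filter.eventually_ge_atTop ({n₀} : Finset ℕ)] with s hs
          exact Finset.prod_eq_zero (hs (Finset.mem_singleton_self n₀)) hn₀
        exact Filter.Tendsto.congr' hev.symm tendsto_const_nhds
      have hS0 : S = 0 := by
        refine tendsto_nhds_unique hTend ?_
        have hev : (fun N => ∏ n ∈ Finset.range N, a n) =ᶠ[Filter.atTop] (fun _ => 0) := by
          filter_upwards [Filter.eventually_ge_atTop (n₀+1)] with N hN
          exact Finset.prod_eq_zero (Finset.mem_range.mpr (by omega)) hn₀
        exact Filter.Tendsto.congr' hev.symm tendsto_const_nhds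
      rw [hP0.tprod_eq, hS0]
    · push_neg at hZero
      have hbound : ∀ᶠ n in Filter.atTop, ‖a n - 1‖
          ≤ (2*‖z‖ + 2*‖z⁻¹‖ + 1 + 2*(‖z‖*‖z⁻¹‖)) * ‖q‖ ^ n := by
        filter_upwards with n
        have hq1 : ∀ m : ℕ, n ≤ m → ‖q‖ ^ m ≤ ‖q‖ ^ n := fun m hm =>
          pow_le_pow_of_le_one (norm_nonneg q) hq.le hm
        set x1 := z * q^(n+1) with hx1
        set x2 := z⁻¹ * q^n with hx2
        set x3 := - q^(n+1) with hx3
        set x4 := z*z⁻¹*q^(2*n+1) with hx4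
        set x5 := - z * q^(2*n+2) with hx5
        set x6 := - z⁻¹ * q^(2*n+1) with hx6
        set x7 := - (z*z⁻¹) * q^(3*n+2) with hx7
        have e : a n - 1 = x1 + x2 + x3 + x4 + x5 + x6 + x7 := by
          rw [ha, hx1, hx2, hx3, hx4, hx5, hx6, hx7]
          simp only []
          rw [show (2*n+1) = (n+1)+n by omega, show (2*n+2) = (n+1)+(n+1) by omega,
            show (3*n+2) = ((n+1)+n)+(n+1) by omega, pow_add, pow_add, pow_add, pow_add]
          ring
        rw [e]
        have hzn : (0:ℝ) ≤ ‖z‖ := norm_nonneg z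
        have hzn' : (0:ℝ) ≤ ‖z⁻¹‖ := norm_nonneg _
        have b1 : ‖x1‖ ≤ ‖z‖ * ‖q‖^n := by
          rw [hx1, norm_mul, norm_pow]
          exact mul_le_mul_of_nonneg_left (hq1 (n+1) (by omega)) hzn
        have b2 : ‖x2‖ ≤ ‖z⁻¹‖ * ‖q‖^n := by rw [hx2, norm_mul, norm_pow]
        have b3 : ‖x3‖ ≤ ‖q‖^n := by
          rw [hx3, norm_neg, norm_pow]; exact hq1 (n+1) (by omega)
        have b4 : ‖x4‖ ≤ ‖z‖*‖z⁻¹‖ * ‖q‖^n := by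
          rw [hx4, norm_mul, norm_mul, norm_pow]
          exact mul_le_mul_of_nonneg_left (hq1 (2*n+1) (by omega)) (by positivity)
        have b5 : ‖x5‖ ≤ ‖z‖ * ‖q‖^n := by
          rw [hx5, neg_mul, norm_neg, norm_mul, norm_pow]
          exact mul_le_mul_of_nonneg_left (hq1 (2*n+2) (by omega)) hzn
        have b6 : ‖x6‖ ≤ ‖z⁻¹‖ * ‖q‖^n := by
          rw [hx6, neg_mul, norm_neg, norm_mul, norm_pow]
          exact mul_le_mul_of_nonneg_left (hq1 (2*n+1) (by omega)) hzn'
        have b7 : ‖x7‖ ≤ ‖z‖*‖z⁻¹‖ * ‖q‖^n := by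
          rw [hx7, neg_mul, norm_neg, norm_mul, norm_mul, norm_pow]
          exact mul_le_mul_of_nonneg_left (hq1 (3*n+2) (by omega)) (by positivity)
        have t1 := norm_add_le (x1+x2+x3+x4+x5+x6) x7
        have t2 := norm_add_le (x1+x2+x3+x4+x5) x6
        have t3 := norm_add_le (x1+x2+x3+x4) x5
        have t4 := norm_add_le (x1+x2+x3) x4
        have t5 := norm_add_le (x1+x2) x3
        have t6 := norm_add_le x1 x2
        linarith
      have hlogsum : Summable (fun n => Complex.log (a n)) :=
        (summable_norm_log_of_bound (norm_nonneg q) hq hbound).of_norm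
      have hProd : HasProd a (Complex.exp (∑' n, Complex.log (a n))) := by
        have hfun : (Complex.exp ∘ fun n => Complex.log (a n)) = a :=
          funext fun n => Complex.exp_log (hZero n)
        have h := hlogsum.hasSum.cexp
        rwa [hfun] at h
      have hSE : Complex.exp (∑' n, Complex.log (a n)) = S :=
        tendsto_nhds_unique hProd.tendsto_prod_nat hTend
      rw [hProd.tprod_eq, hSE]
end
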